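/- The inclusion functor from the category of saturated commutative monoids into the category of all commutative monoids has a left adjoint, given by M ↦ M^sat = { m ∈ M^gp | ∃ a ≥ 1, a·m ∈ M^int }. Consequently, the limit in the category of commutative monoids of any diagram of saturated monoids is saturated. -/

import Mathlib

open CategoryTheory

/-- A commutative monoid is saturated: it is integral (cancellative) and, whenever
`n • a = c + n • b` for some `n ≥ 1` and some `c` (i.e. the element `a - b` of the
groupification satisfies `n • (a - b) ∈ M`), one has `a = d + b` for some `d`
(i.e. `a - b ∈ M`). -/
def SaturatedPred (M : AddCommMonCat) : Prop :=
  (∀ a b c : ↥M, a + b = a + c → b = c) ∧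
  ∀ (a b : ↥M) (n : ℕ), 0 < n → (∃ c : ↥M, n • a = c + n • b) → ∃ d : ↥M, a = d + b

universe u

namespace Stmt12Aux

variable (M : Type u) [AddCommMonoid M]

def gpSetoid : Setoid (M × M) where
  r p q := ∃ k, p.1 + q.2 + k = q.1 + p.2 + k
  iseqv := by
    constructor
    · exact fun p => ⟨0, rfl⟩
    · rintro p q ⟨k, hk⟩; exact ⟨k, hk.symm⟩
    · rintro p q r ⟨k, hk⟩ ⟨l, hl⟩
      refine ⟨q.1 + q.2 + k + l, ?_⟩
      calc p.1 + r.2 + (q.1 + q.2 + k + l) = (p.1 + q.2 + k) + (q.1 + r.2 + l) := by abel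
        _ = (q.1 + p.2 + k) + (r.1 + q.2 + l) := by rw [hk, hl]
        _ = r.1 + p.2 + (q.1 + q.2 + k + l) := by abel

def Gp := Quotient (gpSetoid M)

variable {M}

def Gp.mk (a b : M) : Gp M := Quotient.mk (gpSetoid M) (a, b)

lemma gp_rel {a b c d : M} (h : (gpSetoid M).r (a,b) (c,d)) : ∃ k, a + d + k = c + b + k := h

instance : Add (Gp M) :=
  ⟨Quotient.map₂ (fun p q => (p.1 + q.1, p.2 + q.2)) (by
    rintro ⟨a, b⟩ ⟨a', b'⟩ ⟨k, hk⟩ ⟨c, d⟩ ⟨c', d'⟩ ⟨l, hl⟩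
    refine ⟨k + l, ?_⟩
    simp only at hk hl ⊢
    calc a + c + (b' + d') + (k + l) = (a + b' + k) + (c + d' + l) := by abel
      _ = (a' + b + k) + (c' + d + l) := by rw [hk, hl]
      _ = a' + c' + (b + d) + (k + l) := by abel)⟩

instance : Zero (Gp M) := ⟨Gp.mk 0 0⟩

instance : Neg (Gp M) :=
  ⟨Quotient.map (fun p => (p.2, p.1)) (by
    rintro ⟨a, b⟩ ⟨c, d⟩ ⟨k, hk⟩
    exact ⟨k, by simpa only [add_comm, add_left_comm] using hk.symm⟩)⟩

lemma Gp.mk_add (a b c d : M) : Gp.mk a b + Gp.mk c d = Gp.mk (a + c) (b + d) := rfl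

lemma Gp.neg_mk (a b : M) : -Gp.mk a b = Gp.mk b a := rfl

instance : AddCommGroup (Gp M) where
  add_assoc x y z := by
    induction x using Quotient.inductionOn with | _ p =>
    induction y using Quotient.inductionOn with | _ q =>
    induction z using Quotient.inductionOn with | _ r =>
    exact Quotient.sound ⟨0, by simp [add_assoc]⟩
  zero_add x := by
    induction x using Quotient.inductionOn with | _ p =>
    exact Quotient.sound ⟨0, by simp [add_comm]⟩
  add_zero x := by
    induction x using Quotient.inductionOn with | _ p =>
    exact Quotient.sound ⟨0, by simp [add_comm]⟩
  add_comm x y := by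
    induction x using Quotient.inductionOn with | _ p =>
    induction y using Quotient.inductionOn with | _ q =>
    exact Quotient.sound ⟨0, by abel_nf⟩
  neg_add_cancel x := by
    induction x using Quotient.inductionOn with | _ p =>
    exact Quotient.sound ⟨0, by simp [add_comm]⟩
  nsmul := nsmulRec
  zsmul := zsmulRec

def toGp : M →+ Gp M where
  toFun a := Gp.mk a 0
  map_zero' := rfl
  map_add' a b := Quotient.sound ⟨0, by simp⟩

lemma Gp.mk_add_toGp (a b : M) : Gp.mk a b + toGp b = toGp a :=
  Quotient.sound ⟨0, by simp [add_comm]⟩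

lemma Gp.mk_eq_sub (a b : M) : Gp.mk a b = toGp a - toGp b :=
  eq_sub_of_add_eq (Gp.mk_add_toGp a b)

lemma toGp_eq_iff {a b : M} : toGp a = toGp b ↔ ∃ k, a + k = b + k := by
  constructor
  · intro h
    obtain ⟨k, hk⟩ := Quotient.exact h
    exact ⟨k, by simpa using hk⟩
  · rintro ⟨k, hk⟩
    exact Quotient.sound ⟨k, by simpa using hk⟩

lemma toGp_injective (hc : ∀ a b c : M, a + b = a + c → b = c) :
    Function.Injective (toGp : M → Gp M) := by
  intro a b h
  obtain ⟨k, hk⟩ := toGp_eq_iff.mp h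
  exact hc k a b (by rw [add_comm k a, add_comm k b]; exact hk)

variable {N P : Type u} [AddCommMonoid N] [AddCommMonoid P]

def gpMap (f : M →+ N) : Gp M →+ Gp N where
  toFun := Quotient.map (fun p => (f p.1, f p.2)) (by
    rintro ⟨a, b⟩ ⟨c, d⟩ ⟨k, hk⟩
    exact ⟨f k, by simpa only [← map_add] using congrArg f hk⟩)
  map_zero' := Quotient.sound ⟨0, by simp⟩
  map_add' x y := by
    induction x using Quotient.inductionOn with | _ p =>
    induction y using Quotient.inductionOn with | _ q =>
    exact Quotient.sound ⟨0, by simp⟩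

lemma gpMap_toGp (f : M →+ N) (a : M) : gpMap f (toGp a) = toGp (f a) :=
  Quotient.sound ⟨0, by simp⟩

lemma gpMap_gpMap (f : M →+ N) (g : N →+ P) (x : Gp M) :
    gpMap g (gpMap f x) = gpMap (g.comp f) x := by
  induction x using Quotient.inductionOn with | _ p => rfl

lemma gpMap_id (x : Gp M) : gpMap (AddMonoidHom.id M) x = x := by
  induction x using Quotient.inductionOn with | _ p => rfl

variable (M) in
def sat : AddSubmonoid (Gp M) where
  carrier := {x | ∃ n : ℕ, 0 < n ∧ ∃ a : M, n • x = toGp a}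
  zero_mem' := ⟨1, one_pos, 0, by simp⟩
  add_mem' := by
    rintro x y ⟨n, hn, a, ha⟩ ⟨m, hm, b, hb⟩
    refine ⟨n * m, Nat.mul_pos hn hm, m • a + n • b, ?_⟩
    rw [smul_add, map_add, map_nsmul, map_nsmul, ← ha, ← hb, ← mul_nsmul, ← mul_nsmul,
      mul_comm m n]

def unitHom : M →+ sat M where
  toFun a := ⟨toGp a, 1, one_pos, a, one_smul _ _⟩
  map_zero' := Subtype.ext (map_zero _)
  map_add' a b := Subtype.ext (map_add _ a b)

lemma coe_unitHom (a : M) : ((unitHom a : sat M) : Gp M) = toGp a := rfl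


section
variable {M : Type u} [AddCommMonoid M]

lemma sat_cancel (a b c : sat M) (h : a + b = a + c) : b = c := by
  apply Subtype.ext
  have h' : (a : Gp M) + b = (a : Gp M) + c := by exact_mod_cast congrArg Subtype.val h
  exact add_left_cancel h'

lemma coe_nsmul_sat (n : ℕ) (x : sat M) : ((n • x : sat M) : Gp M) = n • (x : Gp M) := by
  induction n with
  | zero => simp
  | succ n ih => rw [succ_nsmul, succ_nsmul, AddSubmonoid.coe_add, ih]

lemma sat_saturated' (a b : sat M) (n : ℕ) (hn : 0 < n)
    (h : ∃ c : sat M, n • a = c + n • b) : ∃ d : sat M, a = d + b := by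
  obtain ⟨c, hc⟩ := h
  have hc' : n • (a : Gp M) = (c : Gp M) + n • (b : Gp M) := by
    have := congrArg Subtype.val hc
    simpa [coe_nsmul_sat] using this
  obtain ⟨m, hm, z, hz⟩ := c.2
  have h1 : n • (a : Gp M) - n • (b : Gp M) = c := sub_eq_of_eq_add hc'
  have hy : (m * n) • ((a : Gp M) - b) = toGp z := by
    rw [mul_comm, mul_nsmul, nsmul_sub, h1]; exact hz
  refine ⟨⟨(a : Gp M) - b, m * n, Nat.mul_pos hm hn, z, hy⟩, ?_⟩
  exact Subtype.ext (by simp)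


variable {N : Type u} [AddCommMonoid N]

lemma exists_toGp_preimage
    (hs : ∀ (a b : N) (n : ℕ), 0 < n → (∃ c : N, n • a = c + n • b) → ∃ d : N, a = d + b)
    {y : Gp N} {n : ℕ} (hn : 0 < n) {a : N} (h : n • y = toGp a) : ∃ b, y = toGp b := by
  obtain ⟨⟨p, q⟩, rfl⟩ := Quotient.exists_rep y
  have hy : (Quotient.mk (gpSetoid N) (p, q) : Gp N) = toGp p - toGp q := Gp.mk_eq_sub p q
  have h2 : n • toGp p = toGp a + n • toGp q := by
    rw [← h, hy, nsmul_sub]; abel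
  have h3 : toGp (n • p) = toGp (a + n • q) := by
    rw [map_nsmul, map_add, map_nsmul]; exact h2
  obtain ⟨k, hk⟩ := toGp_eq_iff.mp h3
  obtain ⟨m, rfl⟩ : ∃ m, n = m + 1 := ⟨n - 1, (Nat.succ_pred_eq_of_pos hn).symm⟩
  have hsat : ∃ d : N, p + k = d + (q + k) := by
    refine hs (p + k) (q + k) (m + 1) (Nat.succ_pos m) ⟨a, ?_⟩
    calc (m + 1) • (p + k) = ((m + 1) • p + k) + m • k := by
          rw [smul_add, succ_nsmul k m]; abel
      _ = ((a + (m + 1) • q) + k) + m • k := by rw [hk]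
      _ = a + (m + 1) • (q + k) := by rw [smul_add, succ_nsmul k m]; abel
  obtain ⟨d, hd⟩ := hsat
  refine ⟨d, ?_⟩
  have h4 : toGp p + toGp k = (toGp d + toGp q) + toGp k := by
    calc toGp p + toGp k = toGp (p + k) := (map_add _ _ _).symm
      _ = toGp (d + (q + k)) := congrArg _ hd
      _ = (toGp d + toGp q) + toGp k := by rw [map_add, map_add]; abel
  have h5 : toGp p = toGp d + toGp q := add_right_cancel h4
  rw [hy, h5, add_sub_cancel_right]

lemma key
    (hs : ∀ (a b : N) (n : ℕ), 0 < n → (∃ c : N, n • a = c + n • b) → ∃ d : N, a = d + b)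
    (f : M →+ N) (x : sat M) : ∃ b : N, gpMap f (x : Gp M) = toGp b := by
  obtain ⟨n, hn, a, ha⟩ := x.2
  have : n • gpMap f (x : Gp M) = toGp (f a) := by
    rw [← map_nsmul, ha, gpMap_toGp]
  obtain ⟨b, hb⟩ := exists_toGp_preimage hs hn this
  exact ⟨b, hb⟩

variable (hc : ∀ a b c : N, a + b = a + c → b = c)
  (hs : ∀ (a b : N) (n : ℕ), 0 < n → (∃ c : N, n • a = c + n • b) → ∃ d : N, a = d + b)

noncomputable def satLift (f : M →+ N) : sat M →+ N where
  toFun x := (key hs f x).choose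
  map_zero' := by
    apply toGp_injective hc
    rw [← (key hs f 0).choose_spec]
    simp
  map_add' x y := by
    apply toGp_injective hc
    rw [map_add, ← (key hs f (x + y)).choose_spec, ← (key hs f x).choose_spec,
      ← (key hs f y).choose_spec, AddSubmonoid.coe_add, map_add]

lemma satLift_spec (f : M →+ N) (x : sat M) :
    toGp (satLift hc hs f x) = gpMap f (x : Gp M) := (key hs f x).choose_spec.symm


def satMap (f : M →+ N) : sat M →+ sat N where
  toFun x := ⟨gpMap f x, by
    obtain ⟨n, hn, a, ha⟩ := x.2
    exact ⟨n, hn, f a, by rw [← map_nsmul, ha, gpMap_toGp]⟩⟩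
  map_zero' := Subtype.ext (by simp)
  map_add' x y := Subtype.ext (by simp)

lemma coe_satMap (f : M →+ N) (x : sat M) :
    ((satMap f x : sat N) : Gp N) = gpMap f (x : Gp M) := rfl

lemma satLift_comp_unitHom (g : sat M →+ N) :
    satLift hc hs (g.comp unitHom) = g := by
  apply AddMonoidHom.ext
  intro x
  apply toGp_injective hc
  rw [satLift_spec]
  obtain ⟨⟨p, q⟩, hpq⟩ := Quotient.exists_rep (x : Gp M)
  have hx' : (x : Gp M) + toGp q = toGp p := by
    rw [← hpq]; exact Gp.mk_add_toGp p q
  have hx : x + unitHom q = unitHom p := Subtype.ext hx'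
  have e1 : gpMap (g.comp unitHom) (x : Gp M)
      + toGp (g (unitHom q)) = toGp (g (unitHom p)) := by
    rw [show (toGp (g (unitHom q)) : Gp N) =
        gpMap (g.comp (unitHom (M := M))) (toGp q) from
          (gpMap_toGp (g.comp (unitHom (M := M))) q).symm,
      ← map_add, hx', gpMap_toGp]
    rfl
  have e2 : toGp (g x) + toGp (g (unitHom q)) = toGp (g (unitHom p)) := by
    calc toGp (g x) + toGp (g (unitHom q)) = toGp (g x + g (unitHom q)) :=
          (map_add _ _ _).symm
      _ = toGp (g (x + unitHom q)) := congrArg _ (map_add g x (unitHom q)).symm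
      _ = toGp (g (unitHom p)) := by rw [hx]
  exact add_right_cancel (e1.trans e2.symm)

lemma unitHom_comp_satLift (f : M →+ N) :
    (satLift hc hs f).comp unitHom = f := by
  apply AddMonoidHom.ext
  intro a
  apply toGp_injective hc
  show toGp (satLift hc hs f (unitHom a)) = toGp (f a)
  rw [satLift_spec]
  exact gpMap_toGp f a

lemma satLift_naturality {M' : Type u} [AddCommMonoid M'] (h : M' →+ M) (f : M →+ N) :
    satLift hc hs (f.comp h) = (satLift hc hs f).comp (satMap h) := by
  apply AddMonoidHom.ext
  intro x
  apply toGp_injective hc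
  show toGp (satLift hc hs (f.comp h) x) = toGp (satLift hc hs f (satMap h x))
  rw [satLift_spec, satLift_spec, coe_satMap, gpMap_gpMap]

end
end Stmt12Aux


namespace Stmt12Aux
open CategoryTheory

def natHom {X : AddCommMonCat.{u}} (x : ↥X) : AddCommMonCat.of (ULift.{u} ℕ) ⟶ X :=
  AddCommMonCat.ofHom ((multiplesHom _ x).comp AddEquiv.ulift.toAddMonoidHom : ULift.{u} ℕ →+ ↥X)

lemma natHom_apply {X : AddCommMonCat.{u}} (x : ↥X) (n : ULift ℕ) :
    natHom x n = n.down • x := rfl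

def satFunctor : AddCommMonCat.{u} ⥤ ObjectProperty.FullSubcategory SaturatedPred where
  obj M := ⟨AddCommMonCat.of (sat (↥M)), sat_cancel, sat_saturated'⟩
  map {M N} f := ObjectProperty.homMk (AddCommMonCat.ofHom (satMap f.hom))
  map_id M := by
    ext x
    exact gpMap_id _
  map_comp {M N P} f g := by
    ext x
    exact (gpMap_gpMap f.hom g.hom _).symm

noncomputable def satCore :
    Adjunction.CoreHomEquiv satFunctor (ObjectProperty.ι SaturatedPred) where
  homEquiv M Y :=
    { toFun := fun g => AddCommMonCat.ofHom (AddMonoidHom.comp g.hom.hom (unitHom (M := ↥M)))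
      invFun := fun f => ObjectProperty.homMk
        (AddCommMonCat.ofHom (satLift Y.property.1 Y.property.2 f.hom))
      left_inv := fun g => InducedCategory.hom_ext (AddCommMonCat.hom_ext
        (satLift_comp_unitHom Y.property.1 Y.property.2 g.hom.hom))
      right_inv := fun f => AddCommMonCat.hom_ext
        (unitHom_comp_satLift Y.property.1 Y.property.2 f.hom) }
  homEquiv_naturality_left_symm {M' M Y} h g :=
    InducedCategory.hom_ext (AddCommMonCat.hom_ext
      (satLift_naturality Y.property.1 Y.property.2 h.hom g.hom))
  homEquiv_naturality_right {M Y Y'} g k := rfl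

end Stmt12Aux

open Stmt12Aux in
lemma unit_app_eq (M : AddCommMonCat.{u}) (a : ↥M) :
    (Adjunction.mkOfHomEquiv satCore).unit.app M a = unitHom a := by
  rw [Adjunction.mkOfHomEquiv_unit_app]
  exact rfl


/-- The inclusion functor from the category of saturated commutative monoids into the
category of all commutative monoids has a left adjoint, given by
`M ↦ M^sat = { m ∈ M^gp | ∃ a ≥ 1, a • m ∈ M^int }` (characterized by: the unit
`φ : M → M^sat` identifies exactly the pairs with `a + k = b + k`, every element of
`M^sat` is a difference of elements in the image of `φ`, and every element of `M^sat`
has a positive multiple in the image of `φ`).  Consequently, the limit of any diagram of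
saturated monoids is saturated. -/
theorem stmt12 :
    (∃ (F : AddCommMonCat ⥤ ObjectProperty.FullSubcategory SaturatedPred)
        (adj : F ⊣ ObjectProperty.ι SaturatedPred),
      ∀ M : AddCommMonCat,
        (∀ a b : ↥M, adj.unit.app M a = adj.unit.app M b ↔ ∃ k : ↥M, a + k = b + k) ∧
        (∀ x : ↥((F ⋙ ObjectProperty.ι SaturatedPred).obj M),
          ∃ a b : ↥M, x + adj.unit.app M b = adj.unit.app M a) ∧
        (∀ x : ↥((F ⋙ ObjectProperty.ι SaturatedPred).obj M),
          ∃ n : ℕ, 0 < n ∧ ∃ a : ↥M, n • x = adj.unit.app M a)) ∧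
    (∀ (J : Type*) [Category J] (D : J ⥤ AddCommMonCat),
      (∀ j : J, SaturatedPred (D.obj j)) →
      ∀ (c : Limits.Cone D), Limits.IsLimit c → SaturatedPred c.pt) := by
  open Stmt12Aux in
  constructor
  · refine ⟨satFunctor, Adjunction.mkOfHomEquiv satCore, fun M => ⟨?_, ?_, ?_⟩⟩
    · intro a b
      rw [unit_app_eq, unit_app_eq]
      constructor
      · intro h
        exact toGp_eq_iff.mp (congrArg Subtype.val h)
      · intro h
        exact Subtype.ext (toGp_eq_iff.mpr h)
    · intro x
      let y : ↥(sat ↥M) := x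
      obtain ⟨⟨p, q⟩, hpq⟩ := Quotient.exists_rep (y : Gp ↥M)
      refine ⟨p, q, ?_⟩
      rw [unit_app_eq, unit_app_eq]
      exact Subtype.ext (show (y : Gp ↥M) + toGp q = toGp p by
        rw [← hpq]; exact Gp.mk_add_toGp p q)
    · intro x
      let y : ↥(sat ↥M) := x
      obtain ⟨n, hn, a, ha⟩ := y.2
      refine ⟨n, hn, a, ?_⟩
      rw [unit_app_eq]
      exact Subtype.ext (show ((n • y : sat ↥M) : Gp ↥M) = toGp a by
        rw [coe_nsmul_sat]; exact ha)
  · intro J _ D hD c hc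
    have hinj : ∀ x y : ↥c.pt, (∀ j, c.π.app j x = c.π.app j y) → x = y := by
      intro x y h
      let cone : Limits.Cone D :=
        { pt := AddCommMonCat.of (ULift ℕ)
          π :=
            { app := fun j => natHom (c.π.app j x)
              naturality := fun j j' f => by
                ext n
                show natHom (c.π.app j' x) n = (D.map f) (natHom (c.π.app j x) n)
                have hw : (D.map f) ((c.π.app j) x) = (c.π.app j') x :=
                  ConcreteCategory.congr_hom (c.w f) x
                rw [natHom_apply, natHom_apply, map_nsmul, hw] } }
      have hx : ∀ j, natHom x ≫ c.π.app j = cone.π.app j := by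
        intro j
        ext n
        show c.π.app j (n.down • x) = n.down • c.π.app j x
        rw [map_nsmul]
      have hy : ∀ j, natHom y ≫ c.π.app j = cone.π.app j := by
        intro j
        ext n
        show c.π.app j (n.down • y) = n.down • c.π.app j x
        rw [map_nsmul, h j]
      have h1 := ConcreteCategory.congr_hom
        ((hc.uniq cone (natHom x) hx).trans (hc.uniq cone (natHom y) hy).symm) (ULift.up 1)
      have h2 : (1 : ℕ) • x = (1 : ℕ) • y := h1
      simpa using h2
    constructor
    · intro a b b' h
      apply hinj
      intro j
      refine (hD j).1 (c.π.app j a) _ _ ?_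
      rw [← map_add, ← map_add, h]
    · rintro a b n hn ⟨x, hx⟩
      choose d hd using fun j => (hD j).2 (c.π.app j a) (c.π.app j b) n hn
        ⟨c.π.app j x, by rw [← map_nsmul, ← map_nsmul, ← map_add, hx]⟩
      have hcomp : ∀ {j j'} (f : j ⟶ j'), (D.map f) (d j) = d j' := by
        intro j j' f
        refine (hD j').1 (c.π.app j' b) _ _ ?_
        have hπ : ∀ z : ↥c.pt, (D.map f) (c.π.app j z) = c.π.app j' z := fun z =>
          ConcreteCategory.congr_hom (c.w f) z
        calc c.π.app j' b + (D.map f) (d j)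
            = (D.map f) (c.π.app j b + d j) := by rw [map_add, hπ b]
          _ = (D.map f) (c.π.app j a) := by
              rw [add_comm ((c.π.app j) b) (d j), ← hd j]
          _ = c.π.app j' a := hπ a
          _ = c.π.app j' b + d j' := by rw [hd j', add_comm]
      let cone : Limits.Cone D :=
        { pt := AddCommMonCat.of (ULift ℕ)
          π :=
            { app := fun j => natHom (d j)
              naturality := fun j j' f => by
                ext m
                show natHom (d j') m = (D.map f) (natHom (d j) m)
                rw [natHom_apply, natHom_apply, map_nsmul, hcomp f] } }
      refine ⟨hc.lift cone (ULift.up 1), ?_⟩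
      apply hinj
      intro j
      have hfac : c.π.app j (hc.lift cone (ULift.up 1)) = d j := by
        have h1 := ConcreteCategory.congr_hom (hc.fac cone j) (ULift.up 1)
        have h2 : c.π.app j (hc.lift cone (ULift.up 1)) = (1 : ℕ) • d j := h1
        simpa using h2
      rw [map_add, hfac]
      exact hd j
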